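/- Let (X, γ) be a generalized Minkowski space such that γ is not a norm, i.e., there exists x ∈ X with γ(−x) ≠ γ(x). Then there exists x₀ ∈ X \ {0} such that ft({x₀, 0}) = {0}, i.e., 0 is the unique minimizer of x ↦ γ(x₀ − x) + γ(0 − x). -/

import Mathlib

/-- A gauge on a real vector space: nonnegative, definite at `0`, positively homogeneous,
and subadditive. -/
def IsGauge {X : Type*} [AddCommGroup X] [Module ℝ X] (γ : X → ℝ) : Prop :=
  (∀ x, 0 ≤ γ x) ∧ (∀ x : X, γ x = 0 → x = 0) ∧
    (∀ (l : ℝ) (x : X), 0 ≤ l → γ (l • x) = l * γ x) ∧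
    ∀ x y, γ (x + y) ≤ γ x + γ y

/-- If the gauge `γ` is not a norm, then there is `x₀ ≠ 0` such that `0` is the unique
minimizer of `x ↦ γ(x₀ - x) + γ(0 - x)`, i.e. `ft({x₀, 0}) = {0}`. -/
theorem exists_fermatTorricelli_singleton_zero_of_not_norm
    {X : Type*} [NormedAddCommGroup X] [NormedSpace ℝ X] [FiniteDimensional ℝ X]
    (γ : X → ℝ) (hγ : IsGauge γ) (hns : ∃ x : X, γ (-x) ≠ γ x) :
    ∃ x₀ : X, x₀ ≠ 0 ∧
      {x : X | ∀ y : X, γ (x₀ - x) + γ (0 - x) ≤ γ (x₀ - y) + γ (0 - y)} = {0} := by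
  obtain ⟨hpos, hdef, hhom, hsub⟩ := hγ
  have γ0 : γ 0 = 0 := by
    have := hhom 0 0 le_rfl
    simpa using this
  -- γ is positive off 0
  have hposne : ∀ x : X, x ≠ 0 → 0 < γ x := fun x hx =>
    lt_of_le_of_ne (hpos x) (fun h => hx (hdef x h.symm))
  -- γ is convex, hence continuous
  have hconv : ConvexOn ℝ Set.univ γ := by
    refine ⟨convex_univ, fun x _ y _ a b ha hb hab => ?_⟩
    calc γ (a • x + b • y) ≤ γ (a • x) + γ (b • y) := hsub _ _
      _ = a * γ x + b * γ y := by rw [hhom a x ha, hhom b y hb]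
  have hcont : Continuous γ := by
    rw [← continuousOn_univ]
    exact hconv.continuousOn isOpen_univ
  -- pick x with γ(-x) > γ(x)
  obtain ⟨x, hx⟩ := hns
  obtain ⟨w, hw⟩ : ∃ w : X, γ w < γ (-w) := by
    rcases lt_or_gt_of_ne hx with h | h
    · exact ⟨-x, by simpa using h⟩
    · exact ⟨x, h⟩
  have hw0 : w ≠ 0 := by
    intro h; rw [h] at hw; simp at hw
  have : Nontrivial X := nontrivial_of_ne w 0 hw0
  -- maximize γ(-u)/γ(u) on the unit sphere
  have hsph : IsCompact (Metric.sphere (0 : X) 1) := isCompact_sphere 0 1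
  have hne : (Metric.sphere (0 : X) 1).Nonempty :=
    NormedSpace.sphere_nonempty.2 (by norm_num)
  have hcontOn : ContinuousOn (fun u : X => γ (-u) / γ u) (Metric.sphere (0 : X) 1) := by
    apply ContinuousOn.div
    · exact (hcont.comp continuous_neg).continuousOn
    · exact hcont.continuousOn
    · intro u hu
      have : u ≠ 0 := by
        intro h
        rw [Metric.mem_sphere, h] at hu
        simp at hu
      exact (hposne u this).ne'
  obtain ⟨x₀, hx₀s, hmax⟩ := hsph.exists_isMaxOn hne hcontOn
  have hx₀ne : x₀ ≠ 0 := by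
    intro h
    rw [Metric.mem_sphere, h] at hx₀s
    simp at hx₀s
  have hA : 0 < γ x₀ := hposne x₀ hx₀ne
  -- key: for all v, γ(-v) * γ x₀ ≤ γ(-x₀) * γ v
  have key : ∀ v : X, γ (-v) * γ x₀ ≤ γ (-x₀) * γ v := by
    intro v
    rcases eq_or_ne v 0 with rfl | hv
    · simp [γ0]
    · set u : X := ‖v‖⁻¹ • v with hu_def
      have hnv : (0:ℝ) < ‖v‖ := norm_pos_iff.2 hv
      have hus : u ∈ Metric.sphere (0 : X) 1 := by
        simp [hu_def, norm_smul, abs_of_pos (inv_pos.2 hnv), inv_mul_cancel₀ hnv.ne']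
      have hune : u ≠ 0 := by
        intro h
        rw [Metric.mem_sphere, h] at hus
        simp at hus
      have hγu : 0 < γ u := hposne u hune
      have hdiv : γ (-u) / γ u ≤ γ (-x₀) / γ x₀ := hmax hus
      have hcross : γ (-u) * γ x₀ ≤ γ (-x₀) * γ u := by
        rw [div_le_div_iff₀ hγu hA] at hdiv
        linarith
      have hv_eq : v = ‖v‖ • u := by
        rw [hu_def, smul_smul, mul_inv_cancel₀ hnv.ne', one_smul]
      have h1 : γ v = ‖v‖ * γ u := by
        conv_lhs => rw [hv_eq]
        rw [hhom _ _ hnv.le]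
      have h2 : γ (-v) = ‖v‖ * γ (-u) := by
        conv_lhs => rw [hv_eq, ← smul_neg]
        rw [hhom _ _ hnv.le]
      rw [h1, h2]
      calc ‖v‖ * γ (-u) * γ x₀ = ‖v‖ * (γ (-u) * γ x₀) := by ring
        _ ≤ ‖v‖ * (γ (-x₀) * γ u) := by
            exact mul_le_mul_of_nonneg_left hcross hnv.le
        _ = γ (-x₀) * (‖v‖ * γ u) := by ring
  -- γ(-x₀) > γ(x₀)
  have hγw : 0 < γ w := hposne w hw0
  have hB : γ x₀ < γ (-x₀) := by
    have h1 := key w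
    nlinarith [hpos (-x₀)]
  set A := γ x₀ with hA_def
  set B := γ (-x₀) with hB_def
  refine ⟨x₀, hx₀ne, ?_⟩
  -- the main two facts
  have main : ∀ z : X, γ (x₀ - z) + γ (-z) ≤ A → z = 0 := by
    intro z hz
    set p := γ (x₀ - z) with hp_def
    set q := γ (-z) with hq_def
    have hp0 : 0 ≤ p := hpos _
    have hq0 : 0 ≤ q := hpos _
    have h1 : B ≤ γ (z - x₀) + q := by
      have := hsub (z - x₀) (-z)
      rw [show z - x₀ + -z = -x₀ by abel] at this
      exact this
    have h2 : γ (z - x₀) * A ≤ B * p := by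
      have := key (x₀ - z)
      simpa [hp_def, neg_sub] using this
    -- B*A ≤ γ(z-x₀)*A + q*A ≤ B*p + q*A
    have h3 : B * A ≤ B * p + q * A := by nlinarith [hpos (z - x₀)]
    -- with p + q ≤ A: A(B-A) ≤ p(B-A), so A ≤ p, so q ≤ 0, q = 0
    have hApq : A ≤ p := by nlinarith
    have hq : q = 0 := by linarith
    have := hdef (-z) hq
    simpa [neg_eq_zero] using this
  have hmin : ∀ z : X, A ≤ γ (x₀ - z) + γ (-z) := by
    intro z
    by_contra h
    push_neg at h
    have := main z h.le
    rw [this] at h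
    simp [γ0] at h
    exact lt_irrefl _ h
  ext z
  simp only [Set.mem_setOf_eq, Set.mem_singleton_iff]
  constructor
  · intro hmem
    have h' : γ (x₀ - z) + γ (-z) ≤ A := by
      have : γ (x₀ - z) + γ (0 - z) ≤ γ x₀ + γ 0 := by simpa using hmem 0
      simpa [γ0, zero_sub] using this
    exact main z h'
  · intro hz y
    subst hz
    simp only [sub_zero, γ0, zero_sub]
    have := hmin y
    simpa [γ0, zero_sub] using this
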